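/- For every nonzero integer r and every non-negative integer n: (i) 2·Σ_{j=0}^{n} (−1)^{r(n−j)} L_{2rj} = Σ_{j=0}^{n} (L_r/2)^j (L_{r(2n−j)} + (−1)^{r(n−j)} L_{rj}) = 2·((−1)^{r+1} L_{2r(n+1)} − (−1)^{r(n+1)} L_{2r} + L_{2rn} + 2(−1)^{rn}) / ((−1)^{r+1}·5·F_r²); and (ii) 2·Σ_{j=0}^{n} (−1)^{r(n−j)} F_{2rj} = Σ_{j=0}^{n} (L_r/2)^j (F_{r(2n−j)} + (−1)^{r(n−j)} F_{rj}) = 2·((−1)^{r+1} F_{2r(n+1)} + (−1)^{r(n+1)} F_{2r} + F_{2rn}) / ((−1)^{r+1}·5·F_r²). -/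

import Mathlib

open Finset

/-- Integer-indexed Fibonacci numbers: `fibZ n = F n`, with
`F (-n) = (-1)^(n+1) * F n`. -/
def fibZ (n : ℤ) : ℤ :=
  if 0 ≤ n then (Nat.fib n.toNat : ℤ) else (-1) ^ (n.natAbs + 1) * (Nat.fib n.natAbs : ℤ)

/-- Integer-indexed Lucas numbers: `lucZ n = L n = F (n+1) + F (n-1)`. -/
def lucZ (n : ℤ) : ℤ := fibZ (n + 1) + fibZ (n - 1)

lemma fibZ_ofNat (k : ℕ) : fibZ (k : ℤ) = Nat.fib k := by
  simp [fibZ]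

lemma fibZ_neg_ofNat (k : ℕ) : fibZ (-(k : ℤ)) = (-1) ^ (k + 1) * Nat.fib k := by
  rcases Nat.eq_zero_or_pos k with h | h
  · subst h; simp [fibZ]
  · rw [fibZ, if_neg (by omega)]
    congr 1 <;> simp [Int.natAbs_neg]

lemma fibZ_rec (n : ℤ) : fibZ (n + 2) = fibZ (n + 1) + fibZ n := by
  obtain ⟨m, rfl | rfl⟩ := Int.eq_nat_or_neg n
  · have h1 : ((m : ℤ) + 1) = ((m + 1 : ℕ) : ℤ) := by push_cast; ring
    have h2 : ((m : ℤ) + 2) = ((m + 2 : ℕ) : ℤ) := by push_cast; ring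
    rw [h1, h2, fibZ_ofNat, fibZ_ofNat, fibZ_ofNat, Nat.fib_add_two]
    push_cast; ring
  · match m with
    | 0 => decide
    | 1 => decide
    | 2 => decide
    | (k+3) =>
      have h1 : (-((k+3 : ℕ) : ℤ) + 2) = -((k+1 : ℕ) : ℤ) := by push_cast; ring
      have h2 : (-((k+3 : ℕ) : ℤ) + 1) = -((k+2 : ℕ) : ℤ) := by push_cast; ring
      rw [h1, h2, fibZ_neg_ofNat, fibZ_neg_ofNat, fibZ_neg_ofNat]
      have : Nat.fib (k+3) = Nat.fib (k+1) + Nat.fib (k+2) := Nat.fib_add_two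
      rw [this]
      push_cast
      ring

noncomputable section

/-- sign -/
def sg (n : ℤ) : ℚ := (-1 : ℚ) ^ n
def fq (n : ℤ) : ℚ := (fibZ n : ℚ)
def lq (n : ℤ) : ℚ := (lucZ n : ℚ)

lemma sg_add (a b : ℤ) : sg (a + b) = sg a * sg b := zpow_add₀ (by norm_num) a b

lemma sg_mul_self (a : ℤ) : sg a * sg a = 1 := by
  rw [sg, ← zpow_add₀ (by norm_num : (-1:ℚ) ≠ 0)]
  exact Even.neg_one_zpow ⟨a, rfl⟩

lemma sg_zero : sg 0 = 1 := rfl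
lemma sg_one : sg 1 = -1 := by rw [sg, zpow_one]
lemma sg_neg (a : ℤ) : sg (-a) = sg a := by
  have h := sg_add a (-a)
  simp only [add_neg_cancel, sg_zero] at h
  have h2 := sg_mul_self a
  -- sg a * sg (-a) = 1 = sg a * sg a, cancel
  have hne : sg a ≠ 0 := by
    rw [sg]; exact zpow_ne_zero _ (by norm_num)
  apply mul_left_cancel₀ hne
  rw [← h]
  exact (sg_mul_self a).symm

lemma fq_rec (n : ℤ) : fq (n + 2) = fq (n + 1) + fq n := by
  rw [fq, fq, fq, fibZ_rec]; push_cast; ring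

lemma lq_rec (n : ℤ) : lq (n + 2) = lq (n + 1) + lq n := by
  simp only [lq, lucZ]
  have h1 := fibZ_rec (n + 1)
  have h2 := fibZ_rec (n - 1)
  have e1 : n + 2 + 1 = n + 1 + 2 := by ring
  have e2 : n + 2 - 1 = n - 1 + 2 := by ring
  have e3 : n + 1 - 1 = n - 1 + 1 := by ring
  rw [e1, e2, e3, h1, h2]; push_cast; ring

lemma fq_zero : fq 0 = 0 := rfl
lemma fq_one : fq 1 = 1 := rfl
lemma lq_def (n : ℤ) : lq n = fq (n + 1) + fq (n - 1) := by
  simp [lq, fq, lucZ]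

lemma sg_natAbs (a : ℤ) : sg a = (-1 : ℚ) ^ a.natAbs := by
  rcases Int.even_or_odd a with he | ho
  · rw [sg, he.neg_one_zpow, (Int.natAbs_even.mpr he).neg_one_pow]
  · rw [sg, ho.neg_one_zpow, (Int.natAbs_odd.mpr ho).neg_one_pow]

lemma fq_neg (b : ℤ) : fq (-b) = -sg b * fq b := by
  obtain ⟨m, rfl | rfl⟩ := Int.eq_nat_or_neg b
  · rw [fq, fq, fibZ_neg_ofNat, fibZ_ofNat, sg_natAbs]
    push_cast
    simp [pow_succ]
  · rw [neg_neg, fq, fq, fibZ_neg_ofNat, fibZ_ofNat, sg_neg, sg_natAbs]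
    push_cast
    simp [pow_succ]
    rw [← mul_assoc, ← pow_add, Even.neg_one_pow ⟨m, rfl⟩, one_mul]

lemma lq_neg (b : ℤ) : lq (-b) = sg b * lq b := by
  rw [lq_def, lq_def]
  have e1 : -b + 1 = -(b - 1) := by ring
  have e2 : -b - 1 = -(b + 1) := by ring
  rw [e1, e2, fq_neg, fq_neg]
  have h1 : sg (b - 1) = -sg b := by
    rw [sub_eq_add_neg, sg_add]
    have : sg (-1) = -1 := by rw [sg]; norm_num
    rw [this]; ring
  have h2 : sg (b + 1) = -sg b := by
    rw [sg_add, sg_one]; ring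
  rw [h1, h2]; ring

/-- Uniqueness for Fibonacci-type recurrences over ℤ. -/
lemma fib_like {u v : ℤ → ℚ} (hu : ∀ n, u (n + 2) = u (n + 1) + u n)
    (hv : ∀ n, v (n + 2) = v (n + 1) + v n) (h0 : u 0 = v 0) (h1 : u 1 = v 1) :
    ∀ n, u n = v n := by
  have key : ∀ n : ℤ, u n = v n ∧ u (n + 1) = v (n + 1) := by
    intro n
    induction n using Int.induction_on with
    | zero => exact ⟨h0, h1⟩
    | succ k ih =>
      refine ⟨ih.2, ?_⟩
      have e : (k : ℤ) + 1 + 1 = (k : ℤ) + 2 := by ring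
      rw [e, hu, hv, ih.1, ih.2]
    | pred k ih =>
      have e : -(k : ℤ) - 1 + 1 = -(k : ℤ) := by ring
      refine ⟨?_, by rw [e]; exact ih.1⟩
      have hu' := hu (-(k : ℤ) - 1)
      have hv' := hv (-(k : ℤ) - 1)
      have e2 : -(k : ℤ) - 1 + 2 = -(k : ℤ) + 1 := by ring
      have e3 : -(k : ℤ) - 1 + 1 = -(k : ℤ) := by ring
      rw [e2, e3] at hu' hv'
      have := ih.1; have := ih.2
      linarith
  exact fun n => (key n).1

lemma sg_add_one (b : ℤ) : sg (b + 1) = -sg b := by rw [sg_add, sg_one]; ring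
lemma sg_sub_one (b : ℤ) : sg (b - 1) = -sg b := by
  rw [sub_eq_add_neg, sg_add, show sg (-1) = -1 by rw [sg]; norm_num]; ring
lemma sg_two_cancel (a b : ℤ) : sg (a + a + b) = sg b := by
  rw [sg_add, sg_add, sg_mul_self, one_mul]

lemma fq_two : fq 2 = 1 := by rw [fq, show fibZ 2 = 1 from by decide]; norm_num
lemma lq_zero : lq 0 = 2 := by rw [lq, show lucZ 0 = 2 from by decide]; norm_num
lemma lq_one : lq 1 = 1 := by rw [lq, show lucZ 1 = 1 from by decide]; norm_num
lemma lq_two : lq 2 = 3 := by rw [lq, show lucZ 2 = 3 from by decide]; norm_num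
lemma lq_neg_one : lq (-1) = -1 := by rw [lq, show lucZ (-1) = -1 from by decide]; norm_num

/-- `L_b F_a = F_{a+b} + (-1)^b F_{a-b}` -/
lemma mulI2 (b a : ℤ) : lq b * fq a = fq (a + b) + sg b * fq (a - b) := by
  refine fib_like (u := fun a => lq b * fq a)
    (v := fun a => fq (a + b) + sg b * fq (a - b)) ?_ ?_ ?_ ?_ a
  · intro n; rw [fq_rec]; ring
  · intro n
    rw [show n + 2 + b = (n + b) + 2 by ring, show n + 2 - b = (n - b) + 2 by ring,
      fq_rec, fq_rec, show n + 1 + b = (n + b) + 1 by ring,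
      show n + 1 - b = (n - b) + 1 by ring]
    ring
  · simp only [fq_zero, mul_zero, zero_add, zero_sub, fq_neg]
    linear_combination (fq b) * sg_mul_self b
  · simp only [fq_one, mul_one]
    rw [show (1 : ℤ) - b = -(b - 1) by ring, fq_neg, sg_sub_one, lq_def,
      show (1 : ℤ) + b = b + 1 by ring]
    linear_combination (-(fq (b - 1))) * sg_mul_self b

/-- `L_a F_b = F_{a+b} - (-1)^b F_{a-b}` -/
lemma mulI2' (a b : ℤ) : lq a * fq b = fq (a + b) - sg b * fq (a - b) := by
  have h := mulI2 a b
  rw [show b - a = -(a - b) by ring, fq_neg] at h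
  rw [h, show b + a = a + b by ring]
  have hs : sg a * sg (a - b) = sg b := by
    rw [← sg_add, show a + (a - b) = (a - b) + (a - b) + b by ring, sg_two_cancel]
  ring_nf
  ring_nf at hs
  linear_combination (-(fq (a-b))) * hs

/-- `L_a L_b = L_{a+b} + (-1)^b L_{a-b}` -/
lemma mulI1 (a b : ℤ) : lq a * lq b = lq (a + b) + sg b * lq (a - b) := by
  rw [lq_def b, mul_add, mulI2 a (b+1), mulI2 a (b-1), lq_def (a+b), lq_def (a-b)]
  rw [show b + 1 + a = a + b + 1 by ring, show b + 1 - a = -(a - b - 1) by ring,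
    show b - 1 + a = a + b - 1 by ring, show b - 1 - a = -(a - b + 1) by ring,
    fq_neg, fq_neg, sg_sub_one, sg_add_one]
  have hs : sg a * sg (a - b) = sg b := by
    rw [← sg_add, show a + (a - b) = (a - b) + (a - b) + b by ring, sg_two_cancel]
  linear_combination (fq (a - b - 1) + fq (a - b + 1)) * hs

/-- `5 F_b = L_{b+1} + L_{b-1}` -/
lemma five_fq (b : ℤ) : 5 * fq b = lq (b + 1) + lq (b - 1) := by
  refine fib_like (u := fun b => 5 * fq b)
    (v := fun b => lq (b + 1) + lq (b - 1)) ?_ ?_ ?_ ?_ b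
  · intro n; rw [fq_rec]; ring
  · intro n
    rw [show n + 2 + 1 = (n + 1) + 2 by ring, show n + 2 - 1 = (n - 1) + 2 by ring,
      lq_rec, lq_rec, show n + 1 + 1 = (n + 1) + 1 by ring,
      show n + 1 - 1 = (n - 1) + 1 by ring]
    ring
  · simp only [fq_zero, mul_zero]; norm_num [lq_one, lq_neg_one]
  · simp only [fq_one, mul_one]; norm_num [lq_two, lq_zero]

/-- `5 F_a F_b = L_{a+b} - (-1)^b L_{a-b}` -/
lemma mulI5 (a b : ℤ) : 5 * (fq a * fq b) = lq (a + b) - sg b * lq (a - b) := by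
  refine fib_like (u := fun a => 5 * (fq a * fq b))
    (v := fun a => lq (a + b) - sg b * lq (a - b)) ?_ ?_ ?_ ?_ a
  · intro n; rw [fq_rec]; ring
  · intro n
    rw [show n + 2 + b = (n + b) + 2 by ring, show n + 2 - b = (n - b) + 2 by ring,
      lq_rec, lq_rec, show n + 1 + b = (n + b) + 1 by ring,
      show n + 1 - b = (n - b) + 1 by ring]
    ring
  · simp only [fq_zero, mul_zero, zero_mul, zero_add, zero_sub, lq_neg, mul_zero]
    linear_combination (lq b) * sg_mul_self b
  · simp only [fq_one, one_mul]
    rw [show (1 : ℤ) - b = -(b - 1) by ring, lq_neg, sg_sub_one,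
      show (1 : ℤ) + b = b + 1 by ring]
    have h5 := five_fq b
    linear_combination h5 + (-(lq (b - 1))) * sg_mul_self b

lemma stepF (r a : ℤ) :
    sg r * (fq a * fq (a + r)) + fq r * fq (a + a + r + r) = fq (a + r) * fq (a + r + r) := by
  have h1 := mulI5 a (a + r)
  have h2 := mulI5 (a + a + r + r) r
  have h3 := mulI5 (a + r) (a + r + r)
  rw [show a - (a + r) = -r by ring, lq_neg, show a + (a + r) = a + a + r by ring,
    sg_add] at h1
  rw [show a + a + r + r - r = a + a + r by ring] at h2
  rw [show a + r - (a + r + r) = -r by ring, lq_neg,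
    show a + r + (a + r + r) = a + a + r + r + r by ring, sg_add, sg_add] at h3
  linear_combination (sg r / 5) * h1 + (1/5) * h2 - (1/5) * h3
    + ((sg a * lq r)/5) * sg_mul_self r - ((sg a * sg r * lq r)/5) * sg_mul_self r
    + ((sg a * lq r * (sg r - 1))/5) * sg_mul_self r

lemma stepL (r a : ℤ) :
    sg r * (lq a * fq (a + r)) + fq r * lq (a + a + r + r) = lq (a + r) * fq (a + r + r) := by
  have h1 := mulI2 a (a + r)
  have h2 := mulI2 (a + a + r + r) r
  have h3 := mulI2 (a + r) (a + r + r)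
  rw [show a + r - a = r by ring, show a + r + a = a + a + r by ring] at h1
  rw [show r + (a + a + r + r) = a + a + r + r + r by ring,
    show r - (a + a + r + r) = -(a + a + r) by ring, fq_neg] at h2
  rw [show a + r + r + (a + r) = a + a + r + r + r by ring,
    show a + r + r - (a + r) = r by ring] at h3
  have hs2 : sg (a + a + r + r) * sg (a + a + r) = sg r := by
    rw [← sg_add, show a + a + r + r + (a + a + r) = (a + a + r) + (a + a + r) + r by ring,
      sg_two_cancel]
  have hs3 : sg (a + r) = sg a * sg r := sg_add a r
  linear_combination sg r * h1 + h2 - h3 - (fq (a + a + r)) * hs2 - (fq r) * hs3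

lemma stepT (r m : ℤ) : fq r * lq m + lq r * fq m = 2 * fq (m + r) := by
  have h1 := mulI2 r m
  have h2 := mulI2 m r
  rw [show r - m = -(m - r) by ring, fq_neg, show r + m = m + r by ring] at h2
  have hs : sg m * sg (m - r) = sg r := by
    rw [← sg_add, show m + (m - r) = m + m + (-r) by ring, sg_two_cancel, sg_neg]
  linear_combination h1 + h2 - fq (m - r) * hs

lemma closedF (r a : ℤ) :
    sg (r + 1) * 5 * fq r * (fq a * fq (a + r))
      = sg (r + 1) * fq (a + a + r + r) + sg (a + r) * fq (r + r) + fq (a + a) := by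
  rw [sg_add_one r]
  have h1 := mulI5 a (a + r)
  have h2 := mulI2 (a + a + r) r
  have h3 := mulI2 r r
  rw [show a - (a + r) = -r by ring, lq_neg, show a + (a + r) = a + a + r by ring] at h1
  rw [show r + (a + a + r) = a + a + r + r by ring,
    show r - (a + a + r) = -(a + a) by ring, fq_neg] at h2
  rw [show r - r = (0:ℤ) by ring, fq_zero, mul_zero, add_zero] at h3
  have hsA : sg (a + a + r) * sg (a + a) = sg r := by
    rw [← sg_add, show a + a + r + (a + a) = (a + a) + (a + a) + r by ring, sg_two_cancel]
  have hs3 : sg (a + r) = sg a * sg r := sg_add a r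
  linear_combination (-(sg r * fq r)) * h1 - sg r * h2 + sg (a + r) * h3
    + (sg r * fq (a + a)) * hsA
    + (fq (a + a) + sg (a + r) * fq r * lq r) * sg_mul_self r

lemma closedL (r a : ℤ) :
    sg (r + 1) * 5 * fq r * (lq a * fq (a + r))
      = sg (r + 1) * lq (a + a + r + r) - sg (a + r) * lq (r + r)
        + lq (a + a) + 2 * sg a := by
  rw [sg_add_one r]
  have hA := mulI2 a (a + r)
  have hB := mulI5 (a + a + r) r
  have hC := mulI5 r r
  rw [show a + r + a = a + a + r by ring, show a + r - a = r by ring] at hA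
  rw [show a + a + r + r = a + a + r + r by ring,
    show a + a + r - r = a + a by ring] at hB
  rw [show r - r = (0:ℤ) by ring, lq_zero] at hC
  have hs3 : sg (a + r) = sg a * sg r := sg_add a r
  linear_combination (-(5 * sg r * fq r)) * hA - sg r * hB + (-(sg a * sg r)) * hC
    + lq (r + r) * hs3 + (2 * sg a + lq (a + a)) * sg_mul_self r

lemma sumF (r : ℤ) (n : ℕ) :
    fq r * ∑ j ∈ Finset.range (n + 1), sg (r * ((n : ℤ) - j)) * fq (2 * r * j)
      = fq (r * n) * fq (r * n + r) := by
  induction n with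
  | zero =>
    rw [Finset.sum_range_one]
    norm_num [fq_zero]
  | succ n ih =>
    rw [Finset.sum_range_succ]
    push_cast
    have hcong : ∀ j ∈ Finset.range (n + 1),
        sg (r * ((n : ℤ) + 1 - j)) * fq (2 * r * j)
          = sg r * (sg (r * ((n : ℤ) - j)) * fq (2 * r * j)) := by
      intro j hj
      rw [show r * ((n : ℤ) + 1 - j) = r + r * ((n : ℤ) - j) by ring, sg_add, mul_assoc]
    rw [Finset.sum_congr rfl hcong, ← Finset.mul_sum,
      show r * ((n : ℤ) + 1 - ((n : ℤ) + 1)) = 0 by ring, sg_zero,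
      show 2 * r * ((n : ℤ) + 1) = r * n + r * n + r + r by ring,
      show r * ((n : ℤ) + 1) = r * n + r by ring]
    linear_combination sg r * ih + stepF r (r * (n : ℤ))

lemma sumL (r : ℤ) (n : ℕ) :
    fq r * ∑ j ∈ Finset.range (n + 1), sg (r * ((n : ℤ) - j)) * lq (2 * r * j)
      = lq (r * n) * fq (r * n + r) := by
  induction n with
  | zero =>
    rw [Finset.sum_range_one]
    norm_num [sg, lq_zero, fq_zero]
    ring
  | succ n ih =>
    rw [Finset.sum_range_succ]
    push_cast
    have hcong : ∀ j ∈ Finset.range (n + 1),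
        sg (r * ((n : ℤ) + 1 - j)) * lq (2 * r * j)
          = sg r * (sg (r * ((n : ℤ) - j)) * lq (2 * r * j)) := by
      intro j hj
      rw [show r * ((n : ℤ) + 1 - j) = r + r * ((n : ℤ) - j) by ring, sg_add, mul_assoc]
    rw [Finset.sum_congr rfl hcong, ← Finset.mul_sum,
      show r * ((n : ℤ) + 1 - ((n : ℤ) + 1)) = 0 by ring, sg_zero,
      show 2 * r * ((n : ℤ) + 1) = r * n + r * n + r + r by ring,
      show r * ((n : ℤ) + 1) = r * n + r by ring]
    linear_combination sg r * ih + stepL r (r * (n : ℤ))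

lemma sumT (r : ℤ) (n : ℕ) :
    fq r * ∑ j ∈ Finset.range (n + 1), (lq r / 2) ^ j * lq (r * ((n : ℤ) - j))
      = 2 * fq (r * n + r) := by
  induction n with
  | zero =>
    rw [Finset.sum_range_one, pow_zero, one_mul,
      show r * (((0:ℕ):ℤ) - ((0:ℕ):ℤ)) = 0 by norm_num, lq_zero,
      show r * ((0:ℕ):ℤ) + r = r by norm_num]
    ring
  | succ n ih =>
    rw [Finset.sum_range_succ']
    push_cast
    have hcong : ∀ j ∈ Finset.range (n + 1),
        (lq r / 2) ^ (j + 1) * lq (r * ((n : ℤ) + 1 - ((j : ℤ) + 1)))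
          = (lq r / 2) * ((lq r / 2) ^ j * lq (r * ((n : ℤ) - j))) := by
      intro j hj
      rw [pow_succ, show r * ((n : ℤ) + 1 - ((j : ℤ) + 1)) = r * ((n : ℤ) - j) by ring]
      ring
    rw [Finset.sum_congr rfl hcong, ← Finset.mul_sum,
      show r * ((n : ℤ) + 1 - 0) = r * n + r by ring,
      show r * ((n : ℤ) + 1) + r = (r * n + r) + r by ring]
    linear_combination (lq r / 2) * ih + stepT r (r * (n : ℤ) + r)

lemma fibZ_ne_zero {r : ℤ} (hr : r ≠ 0) : fibZ r ≠ 0 := by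
  have hpos : 0 < Nat.fib r.natAbs := Nat.fib_pos.mpr (Int.natAbs_pos.mpr hr)
  rcases Int.natAbs_eq r with h | h
  · rw [h, fibZ_ofNat]; exact_mod_cast hpos.ne'
  · rw [h, fibZ_neg_ofNat]
    exact mul_ne_zero (pow_ne_zero _ (by norm_num)) (by exact_mod_cast hpos.ne')

lemma fq_ne_zero {r : ℤ} (hr : r ≠ 0) : fq r ≠ 0 := by
  simp only [fq]
  exact_mod_cast fibZ_ne_zero hr

lemma sg_ne_zero (k : ℤ) : sg k ≠ 0 := by
  rw [sg]; exact zpow_ne_zero _ (by norm_num)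

lemma convL (r nn j : ℤ) :
    lq (r * (2 * nn - j)) + sg (r * (nn - j)) * lq (r * j)
      = lq (r * nn) * lq (r * (nn - j)) := by
  have h := mulI1 (r * nn) (r * (nn - j))
  rw [show r * nn + r * (nn - j) = r * (2 * nn - j) by ring,
    show r * nn - r * (nn - j) = r * j by ring] at h
  exact h.symm

lemma convF (r nn j : ℤ) :
    fq (r * (2 * nn - j)) + sg (r * (nn - j)) * fq (r * j)
      = lq (r * (nn - j)) * fq (r * nn) := by
  have h := mulI2 (r * (nn - j)) (r * nn)
  rw [show r * nn + r * (nn - j) = r * (2 * nn - j) by ring,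
    show r * nn - r * (nn - j) = r * j by ring] at h
  exact h.symm

lemma sg_def' (k : ℤ) : (-1 : ℚ) ^ k = sg k := rfl
lemma fq_def' (k : ℤ) : ((fibZ k : ℤ) : ℚ) = fq k := rfl
lemma lq_def' (k : ℤ) : ((lucZ k : ℤ) : ℚ) = lq k := rfl

theorem thm4_sums (r : ℤ) (hr : r ≠ 0) (n : ℕ) :
    ((2 * ∑ j ∈ Finset.range (n + 1),
        (-1 : ℚ) ^ (r * ((n : ℤ) - j)) * (lucZ (2 * r * (j : ℤ)) : ℚ)
      = ∑ j ∈ Finset.range (n + 1),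
        ((lucZ r : ℚ) / 2) ^ j
          * ((lucZ (r * (2 * (n : ℤ) - j)) : ℚ)
            + (-1 : ℚ) ^ (r * ((n : ℤ) - j)) * (lucZ (r * (j : ℤ)) : ℚ))) ∧
    (2 * ∑ j ∈ Finset.range (n + 1),
        (-1 : ℚ) ^ (r * ((n : ℤ) - j)) * (lucZ (2 * r * (j : ℤ)) : ℚ)
      = 2 * ((-1 : ℚ) ^ (r + 1) * (lucZ (2 * r * ((n : ℤ) + 1)) : ℚ)
          - (-1 : ℚ) ^ (r * ((n : ℤ) + 1)) * (lucZ (2 * r) : ℚ)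
          + (lucZ (2 * r * (n : ℤ)) : ℚ) + 2 * (-1 : ℚ) ^ (r * (n : ℤ)))
        / ((-1 : ℚ) ^ (r + 1) * 5 * (fibZ r : ℚ) ^ 2))) ∧
    ((2 * ∑ j ∈ Finset.range (n + 1),
        (-1 : ℚ) ^ (r * ((n : ℤ) - j)) * (fibZ (2 * r * (j : ℤ)) : ℚ)
      = ∑ j ∈ Finset.range (n + 1),
        ((lucZ r : ℚ) / 2) ^ j
          * ((fibZ (r * (2 * (n : ℤ) - j)) : ℚ)
            + (-1 : ℚ) ^ (r * ((n : ℤ) - j)) * (fibZ (r * (j : ℤ)) : ℚ))) ∧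
    (2 * ∑ j ∈ Finset.range (n + 1),
        (-1 : ℚ) ^ (r * ((n : ℤ) - j)) * (fibZ (2 * r * (j : ℤ)) : ℚ)
      = 2 * ((-1 : ℚ) ^ (r + 1) * (fibZ (2 * r * ((n : ℤ) + 1)) : ℚ)
          + (-1 : ℚ) ^ (r * ((n : ℤ) + 1)) * (fibZ (2 * r) : ℚ)
          + (fibZ (2 * r * (n : ℤ)) : ℚ))
        / ((-1 : ℚ) ^ (r + 1) * 5 * (fibZ r : ℚ) ^ 2))) := by
  have hfr : fq r ≠ 0 := fq_ne_zero hr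
  have hT := sumT r n
  have hL := sumL r n
  have hF := sumF r n
  simp only [sg_def', fq_def', lq_def']
  have hD : sg (r + 1) * 5 * fq r ^ 2 ≠ 0 :=
    mul_ne_zero (mul_ne_zero (sg_ne_zero _) (by norm_num)) (pow_ne_zero 2 hfr)
  refine ⟨⟨?_, ?_⟩, ?_, ?_⟩
  · -- 1L
    have hS2 : (∑ j ∈ Finset.range (n + 1), (lq r / 2) ^ j
          * (lq (r * (2 * (n : ℤ) - j)) + sg (r * ((n : ℤ) - j)) * lq (r * (j : ℤ))))
        = lq (r * (n : ℤ))
          * ∑ j ∈ Finset.range (n + 1), (lq r / 2) ^ j * lq (r * ((n : ℤ) - j)) := by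
      rw [Finset.mul_sum]
      refine Finset.sum_congr rfl fun j hj => ?_
      rw [convL r (n : ℤ) (j : ℤ)]
      ring
    rw [hS2]
    apply mul_left_cancel₀ hfr
    linear_combination 2 * hL - lq (r * (n : ℤ)) * hT
  · -- 2L
    rw [eq_div_iff hD,
      show 2 * r * ((n : ℤ) + 1) = r * (n : ℤ) + r * (n : ℤ) + r + r by ring,
      show 2 * r * (n : ℤ) = r * (n : ℤ) + r * (n : ℤ) by ring,
      show r * ((n : ℤ) + 1) = r * (n : ℤ) + r by ring,
      show lq (2 * r) = lq (r + r) from congrArg lq (by ring)]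
    linear_combination (2 * sg (r + 1) * 5 * fq r) * hL + 2 * closedL r (r * (n : ℤ))
  · -- 1F
    have hS2 : (∑ j ∈ Finset.range (n + 1), (lq r / 2) ^ j
          * (fq (r * (2 * (n : ℤ) - j)) + sg (r * ((n : ℤ) - j)) * fq (r * (j : ℤ))))
        = fq (r * (n : ℤ))
          * ∑ j ∈ Finset.range (n + 1), (lq r / 2) ^ j * lq (r * ((n : ℤ) - j)) := by
      rw [Finset.mul_sum]
      refine Finset.sum_congr rfl fun j hj => ?_
      rw [convF r (n : ℤ) (j : ℤ)]
      ring
    rw [hS2]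
    apply mul_left_cancel₀ hfr
    linear_combination 2 * hF - fq (r * (n : ℤ)) * hT
  · -- 2F
    rw [eq_div_iff hD,
      show 2 * r * ((n : ℤ) + 1) = r * (n : ℤ) + r * (n : ℤ) + r + r by ring,
      show 2 * r * (n : ℤ) = r * (n : ℤ) + r * (n : ℤ) by ring,
      show r * ((n : ℤ) + 1) = r * (n : ℤ) + r by ring,
      show fq (2 * r) = fq (r + r) from congrArg fq (by ring)]
    linear_combination (2 * sg (r + 1) * 5 * fq r) * hF + 2 * closedF r (r * (n : ℤ))
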